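/- If 2 < a < b, then the automorphism group of C₀(a,b), namely the group of coordinate permutations of {1,…,a}×{1,…,b} preserving C₀(a,b), is exactly the image of Sym(a) × Sym(b) acting via (i,j)^(σ,τ) = (i^σ, j^τ). -/

import Mathlib

/-- The elementary row matrix `r_i`: 1's exactly in row `i`. -/
def rowMat (a b : ℕ) (i : Fin a) : Matrix (Fin a) (Fin b) (ZMod 2) :=
  fun i' _ => if i' = i then 1 else 0

/-- The elementary column matrix `c_j`: 1's exactly in column `j`. -/
def colMat (a b : ℕ) (j : Fin b) : Matrix (Fin a) (Fin b) (ZMod 2) :=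
  fun _ j' => if j' = j then 1 else 0

/-- The code `C₀(a,b)`, spanned by the elementary row and column matrices. -/
def C0 (a b : ℕ) : Submodule (ZMod 2) (Matrix (Fin a) (Fin b) (ZMod 2)) :=
  Submodule.span (ZMod 2) (Set.range (rowMat a b) ∪ Set.range (colMat a b))


lemma mem_C0_iff {a b : ℕ} (M : Matrix (Fin a) (Fin b) (ZMod 2)) :
    M ∈ C0 a b ↔ ∃ x : Fin a → ZMod 2, ∃ y : Fin b → ZMod 2, ∀ i j, M i j = x i + y j := by
  constructor
  · intro hM
    induction hM using Submodule.span_induction with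
    | mem v hv =>
      rcases hv with ⟨i0, rfl⟩ | ⟨j0, rfl⟩
      · exact ⟨fun i => if i = i0 then 1 else 0, 0, fun i j => by simp [rowMat]⟩
      · exact ⟨0, fun j => if j = j0 then 1 else 0, fun i j => by simp [colMat]⟩
    | zero => exact ⟨0, 0, fun i j => by simp [Matrix.zero_apply]⟩
    | add u v _ _ hu hv =>
      obtain ⟨x1, y1, h1⟩ := hu; obtain ⟨x2, y2, h2⟩ := hv
      exact ⟨x1 + x2, y1 + y2, fun i j => by
        simp [Matrix.add_apply, h1, h2]; ring⟩
    | smul c v _ hv =>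
      obtain ⟨x1, y1, h1⟩ := hv
      exact ⟨fun i => c * x1 i, fun j => c * y1 j, fun i j => by
        simp [Matrix.smul_apply, h1, smul_eq_mul]; ring⟩
  · rintro ⟨x, y, h⟩
    have hMeq : M = (∑ i0 : Fin a, x i0 • rowMat a b i0) + (∑ j0 : Fin b, y j0 • colMat a b j0) := by
      funext i j
      simp [Matrix.add_apply, Matrix.sum_apply, Matrix.smul_apply, rowMat, colMat, h i j,
        smul_eq_mul, mul_ite, mul_one, mul_zero, Finset.sum_ite_eq, Finset.sum_ite_eq']
    rw [hMeq]
    refine Submodule.add_mem _ (Submodule.sum_mem _ fun i0 _ => Submodule.smul_mem _ _ ?_)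
      (Submodule.sum_mem _ fun j0 _ => Submodule.smul_mem _ _ ?_)
    · exact Submodule.subset_span (Or.inl ⟨i0, rfl⟩)
    · exact Submodule.subset_span (Or.inr ⟨j0, rfl⟩)

lemma h4 : ∀ u v w z : ZMod 2, (u + w) + (u + z) + (v + w) + (v + z) = 0 := by decide

lemma exactly_pair {α : Type*} [DecidableEq α] {w x y z : α}
    (H : ∀ r : α, (if w = r then (1 : ZMod 2) else 0) + (if x = r then 1 else 0)
        + (if y = r then 1 else 0) + (if z = r then 1 else 0) = 0)
    (hwx : w ≠ x) : (y = w ∧ z = x) ∨ (y = x ∧ z = w) := by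
  by_cases hyw : y = w <;> by_cases hzx : z = x
  · exact Or.inl ⟨hyw, hzx⟩
  · exfalso
    have Hx := H x
    rw [if_neg hwx, if_pos rfl, if_neg (by rw [hyw]; exact hwx), if_neg hzx] at Hx
    exact absurd Hx (by decide)
  · exfalso
    have Hw := H w
    rw [if_pos rfl, if_neg (Ne.symm hwx), if_neg hyw,
      if_neg (by rw [hzx]; exact Ne.symm hwx)] at Hw
    exact absurd Hw (by decide)
  · refine Or.inr ⟨?_, ?_⟩
    · by_cases hyx : y = x
      · exact hyx
      · exfalso
        have Hx := H x
        rw [if_neg hwx, if_pos rfl, if_neg hyx, if_neg hzx] at Hx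
        exact absurd Hx (by decide)
    · by_cases hzw : z = w
      · exact hzw
      · exfalso
        have Hw := H w
        rw [if_pos rfl, if_neg (Ne.symm hwx), if_neg hyw, if_neg hzw] at Hw
        exact absurd Hw (by decide)

lemma exists_two_ne {n : ℕ} (hn : 2 < n) (i : Fin n) :
    ∃ i1 i2 : Fin n, i1 ≠ i ∧ i2 ≠ i ∧ i1 ≠ i2 := by
  rcases Nat.lt_or_ge i.val 1 with h | h
  · exact ⟨⟨1, by omega⟩, ⟨2, by omega⟩, by simp [Fin.ext_iff]; omega,
      by simp [Fin.ext_iff]; omega, by simp [Fin.ext_iff]⟩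
  · rcases Nat.lt_or_ge i.val 2 with h' | h'
    · exact ⟨⟨0, by omega⟩, ⟨2, by omega⟩, by simp [Fin.ext_iff]; omega,
        by simp [Fin.ext_iff]; omega, by simp [Fin.ext_iff]⟩
    · exact ⟨⟨0, by omega⟩, ⟨1, by omega⟩, by simp [Fin.ext_iff]; omega,
        by simp [Fin.ext_iff]; omega, by simp [Fin.ext_iff]⟩

lemma rect_sum {a b : ℕ} (M : Matrix (Fin a) (Fin b) (ZMod 2)) (hM : M ∈ C0 a b)
    (i i' : Fin a) (j j' : Fin b) : M i j + M i j' + M i' j + M i' j' = 0 := by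
  obtain ⟨x, y, hxy⟩ := (mem_C0_iff M).1 hM
  rw [hxy, hxy, hxy, hxy]
  exact h4 (x i) (x i') (y j) (y j')

theorem aut_C0_direct_product (a b : ℕ) (ha : 2 < a) (hab : a < b) :
    ∀ φ : Equiv.Perm (Fin a × Fin b),
      (∀ M ∈ C0 a b, (fun i j => M (φ (i, j)).1 (φ (i, j)).2) ∈ C0 a b) ↔
        ∃ (σ : Equiv.Perm (Fin a)) (τ : Equiv.Perm (Fin b)),
          ∀ p : Fin a × Fin b, φ p = (σ p.1, τ p.2) := by
  intro φ
  constructor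
  · intro hφ
    have hinj : Function.Injective φ := φ.injective
    have hb3 : 2 < b := lt_trans ha hab
    -- rectangle sums
    have hrect : ∀ M ∈ C0 a b, ∀ (i i' : Fin a) (j j' : Fin b),
        M (φ (i, j)).1 (φ (i, j)).2 + M (φ (i, j')).1 (φ (i, j')).2
          + M (φ (i', j)).1 (φ (i', j)).2 + M (φ (i', j')).1 (φ (i', j')).2 = 0 := by
      intro M hM i i' j j'
      simpa using rect_sum _ (hφ M hM) i i' j j'
    have hrow : ∀ (i i' : Fin a) (j j' : Fin b) (r : Fin a),
        (if (φ (i, j)).1 = r then (1 : ZMod 2) else 0)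
          + (if (φ (i, j')).1 = r then 1 else 0)
          + (if (φ (i', j)).1 = r then 1 else 0)
          + (if (φ (i', j')).1 = r then 1 else 0) = 0 := by
      intro i i' j j' r
      have := hrect (rowMat a b r) (Submodule.subset_span (Or.inl ⟨r, rfl⟩)) i i' j j'
      simpa [rowMat] using this
    have hcol : ∀ (i i' : Fin a) (j j' : Fin b) (c : Fin b),
        (if (φ (i, j)).2 = c then (1 : ZMod 2) else 0)
          + (if (φ (i, j')).2 = c then 1 else 0)
          + (if (φ (i', j)).2 = c then 1 else 0)
          + (if (φ (i', j')).2 = c then 1 else 0) = 0 := by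
      intro i i' j j' c
      have := hrect (colMat a b c) (Submodule.subset_span (Or.inr ⟨c, rfl⟩)) i i' j j'
      simpa [colMat] using this
    -- pair determination
    have hpairs : ∀ (i i' : Fin a) (j j' : Fin b), i ≠ i' → j ≠ j' →
        (φ (i, j)).1 ≠ (φ (i, j')).1 → (φ (i, j)).2 ≠ (φ (i, j')).2 →
        (φ (i', j) = ((φ (i, j)).1, (φ (i, j')).2)
            ∧ φ (i', j') = ((φ (i, j')).1, (φ (i, j)).2))
          ∨ (φ (i', j) = ((φ (i, j')).1, (φ (i, j)).2)
            ∧ φ (i', j') = ((φ (i, j)).1, (φ (i, j')).2)) := by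
      intro i i' j j' hii hjj h1 h2
      have hr := exactly_pair (fun r => hrow i i' j j' r) h1
      have hc := exactly_pair (fun c => hcol i i' j j' c) h2
      have d3 : φ (i', j) ≠ φ (i, j) := by
        intro h
        have := hinj h
        rw [Prod.mk.injEq] at this
        exact hii this.1.symm
      have d32 : φ (i', j) ≠ φ (i, j') := by
        intro h
        have := hinj h
        rw [Prod.mk.injEq] at this
        exact hii this.1.symm
      rcases hr with ⟨hyr, hzr⟩ | ⟨hyr, hzr⟩ <;> rcases hc with ⟨hyc, hzc⟩ | ⟨hyc, hzc⟩
      · exact absurd (Prod.ext hyr hyc) d3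
      · exact Or.inl ⟨Prod.ext hyr hyc, Prod.ext hzr hzc⟩
      · exact Or.inr ⟨Prod.ext hyr hyc, Prod.ext hzr hzc⟩
      · exact absurd (Prod.ext hyr hyc) d32
    -- alignment along rows
    have halign : ∀ (i : Fin a) (j j' : Fin b),
        (φ (i, j)).1 = (φ (i, j')).1 ∨ (φ (i, j)).2 = (φ (i, j')).2 := by
      intro i j j'
      by_cases hjj : j = j'
      · subst hjj; exact Or.inl rfl
      by_contra hcon
      push_neg at hcon
      obtain ⟨h1, h2⟩ := hcon
      obtain ⟨i1, i2, hi1, hi2, hi12⟩ := exists_two_ne ha i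
      have P1 := hpairs i i1 j j' (Ne.symm hi1) hjj h1 h2
      have P2 := hpairs i i2 j j' (Ne.symm hi2) hjj h1 h2
      rcases P1 with ⟨e1, e2⟩ | ⟨e1, e2⟩ <;> rcases P2 with ⟨f1, f2⟩ | ⟨f1, f2⟩
      · have := hinj (e1.trans f1.symm); rw [Prod.mk.injEq] at this; exact hi12 this.1
      · have := hinj (e1.trans f2.symm); rw [Prod.mk.injEq] at this; exact hjj this.2
      · have := hinj (e1.trans f2.symm); rw [Prod.mk.injEq] at this; exact hjj this.2
      · have := hinj (e1.trans f1.symm); rw [Prod.mk.injEq] at this; exact hi12 this.1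
    -- each row maps into a single row
    have hrowconst : ∀ (i : Fin a) (j j' : Fin b), (φ (i, j)).1 = (φ (i, j')).1 := by
      intro i j j'
      have hj0lt : (0 : ℕ) < b := by omega
      have hj1lt : (1 : ℕ) < b := by omega
      set j0 : Fin b := ⟨0, hj0lt⟩ with hj0def
      set j1 : Fin b := ⟨1, hj1lt⟩ with hj1def
      have hj01 : j0 ≠ j1 := by simp [hj0def, hj1def, Fin.ext_iff]
      rcases halign i j0 j1 with hcase | hcase
      · have hall : ∀ j2, (φ (i, j2)).1 = (φ (i, j0)).1 := by
          intro j2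
          rcases halign i j0 j2 with h | h
          · exact h.symm
          · rcases halign i j1 j2 with h' | h'
            · exact h'.symm.trans hcase.symm
            · exfalso
              have heq : φ (i, j0) = φ (i, j1) := Prod.ext hcase (h.trans h'.symm)
              have := hinj heq; rw [Prod.mk.injEq] at this; exact hj01 this.2
        rw [hall j, hall j']
      · exfalso
        have hall : ∀ j2, (φ (i, j2)).2 = (φ (i, j0)).2 := by
          intro j2
          rcases halign i j0 j2 with h | h
          · rcases halign i j1 j2 with h' | h'
            · exfalso
              have heq : φ (i, j0) = φ (i, j1) := Prod.ext (h.trans h'.symm) hcase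
              have := hinj heq; rw [Prod.mk.injEq] at this; exact hj01 this.2
            · exact h'.symm.trans hcase.symm
          · exact h.symm
        have hinj2 : Function.Injective (fun j2 : Fin b => (φ (i, j2)).1) := by
          intro u v huv
          have heq : φ (i, u) = φ (i, v) :=
            Prod.ext huv ((hall u).trans (hall v).symm)
          have := hinj heq; rw [Prod.mk.injEq] at this; exact this.2
        have hcard := Fintype.card_le_of_injective _ hinj2
        simp only [Fintype.card_fin] at hcard
        omega
    -- columns consistent across rows
    have hcolconst : ∀ (i i' : Fin a) (j : Fin b), (φ (i, j)).2 = (φ (i', j)).2 := by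
      intro i i' j
      by_cases hii : i = i'
      · rw [hii]
      by_contra hne
      obtain ⟨j'1, j'2, hj1, hj2, hj12⟩ := exists_two_ne hb3 j
      have hz : ∀ j' : Fin b, j' ≠ j → (φ (i', j')).2 = (φ (i, j)).2 := by
        intro j' hj'
        have hwx : (φ (i, j)).2 ≠ (φ (i, j')).2 := by
          intro h
          have heq : φ (i, j) = φ (i, j') := Prod.ext (hrowconst i j j') h
          have := hinj heq; rw [Prod.mk.injEq] at this; exact hj' this.2.symm
        have hc := exactly_pair (fun c => hcol i i' j j' c) hwx
        rcases hc with ⟨hy, hz'⟩ | ⟨hy, hz'⟩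
        · exact absurd hy.symm hne
        · exact hz'
      have e1 := hz j'1 hj1
      have e2 := hz j'2 hj2
      have heq : φ (i', j'1) = φ (i', j'2) :=
        Prod.ext (hrowconst i' j'1 j'2) (e1.trans e2.symm)
      have := hinj heq; rw [Prod.mk.injEq] at this; exact hj12 this.2
    -- assemble
    have ha0 : (0 : ℕ) < a := by omega
    have hb0 : (0 : ℕ) < b := by omega
    set i0 : Fin a := ⟨0, ha0⟩
    set j0 : Fin b := ⟨0, hb0⟩
    have hform : ∀ p : Fin a × Fin b, φ p = ((φ (p.1, j0)).1, (φ (i0, p.2)).2) := by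
      rintro ⟨i, j⟩
      exact Prod.ext (hrowconst i j j0) (hcolconst i i0 j)
    have hσinj : Function.Injective (fun i : Fin a => (φ (i, j0)).1) := by
      intro u v h
      have h' : (φ (u, j0)).1 = (φ (v, j0)).1 := h
      have heq : φ (u, j0) = φ (v, j0) :=
        Prod.ext h' ((hcolconst u i0 j0).trans (hcolconst i0 v j0))
      have := hinj heq; rw [Prod.mk.injEq] at this; exact this.1
    have hτinj : Function.Injective (fun j : Fin b => (φ (i0, j)).2) := by
      intro u v h
      have h' : (φ (i0, u)).2 = (φ (i0, v)).2 := h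
      have heq : φ (i0, u) = φ (i0, v) :=
        Prod.ext ((hrowconst i0 u j0).trans (hrowconst i0 j0 v)) h'
      have := hinj heq; rw [Prod.mk.injEq] at this; exact this.2
    refine ⟨Equiv.ofBijective _ (Finite.injective_iff_bijective.mp hσinj),
      Equiv.ofBijective _ (Finite.injective_iff_bijective.mp hτinj), fun p => ?_⟩
    rw [hform p]
    rfl
  · rintro ⟨σ, τ, hστ⟩ M hM
    rw [mem_C0_iff] at hM
    refine (mem_C0_iff (fun i j => M (φ (i, j)).1 (φ (i, j)).2 : Matrix (Fin a) (Fin b) (ZMod 2))).2 ?_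
    obtain ⟨x, y, hxy⟩ := hM
    refine ⟨fun i => x (σ i), fun j => y (τ j), fun i j => ?_⟩
    simp only [hστ (i, j)]
    exact hxy (σ i) (τ j)
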